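/- Let p ∈ (1,+∞) and let W₀ : M^{3×2} → [0,+∞] satisfy the stated hypotheses. Then the rank-one convex envelope RW₀ is finite-valued and continuous on M^{3×2}, it satisfies RW₀(F) ≥ C₁|F|^p − C₁⁻¹ for every F (with the same constant C₁ as in the coercivity hypothesis on W₀), and there exists a constant C > 0 such that RW₀(F) ≤ C(1+|F|^p) for every F ∈ M^{3×2}. -/

import Mathlib

open scoped ENNReal
open MeasureTheory

noncomputable section

/-- Frobenius norm of a real matrix. -/
def frob {m n : ℕ} (A : Matrix (Fin m) (Fin n) ℝ) : ℝ :=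
  Real.sqrt (∑ i, ∑ j, (A i j) ^ 2)

/-- Euclidean norm on ℝ³ (viewed as `Fin 3 → ℝ`). -/
def enorm3 (v : Fin 3 → ℝ) : ℝ := Real.sqrt (∑ i, (v i) ^ 2)

/-- Cross product `F¹ ∧ F²` of the two columns of `F ∈ M^{3×2}`. -/
def colCross (F : Matrix (Fin 3) (Fin 2) ℝ) : Fin 3 → ℝ :=
  crossProduct (fun i => F i 0) (fun i => F i 1)

/-- Rank-one convexity of an `[0,+∞]`-valued function on `M^{3×2}`. -/
def RankOneConvex (g : Matrix (Fin 3) (Fin 2) ℝ → ℝ≥0∞) : Prop :=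
  ∀ l : ℝ, l ∈ Set.Ioo (0 : ℝ) 1 → ∀ A B : Matrix (Fin 3) (Fin 2) ℝ, (A - B).rank = 1 →
    g (l • A + (1 - l) • B) ≤ ENNReal.ofReal l * g A + ENNReal.ofReal (1 - l) * g B

/-- Rank-one convex envelope: the pointwise supremum of all rank-one convex functions below `f`. -/
def rcEnv (f : Matrix (Fin 3) (Fin 2) ℝ → ℝ≥0∞) (F : Matrix (Fin 3) (Fin 2) ℝ) : ℝ≥0∞ :=
  ⨆ (g : Matrix (Fin 3) (Fin 2) ℝ → ℝ≥0∞) (_ : RankOneConvex g ∧ ∀ G, g G ≤ f G), g F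

/-- Gradient matrix of a map `φ : ℝ² → ℝ³`. -/
def gradM (φ : EuclideanSpace ℝ (Fin 2) → EuclideanSpace ℝ (Fin 3))
    (x : EuclideanSpace ℝ (Fin 2)) : Matrix (Fin 3) (Fin 2) ℝ :=
  Matrix.of fun i j => fderiv ℝ φ x (EuclideanSpace.single j 1) i

/-- Quasiconvex envelope: `Qf(ξ) = inf { ⨍_{B₁} f(ξ + ∇φ) : φ Lipschitz, φ = 0 outside B₁ }`. -/
def qcEnv (f : Matrix (Fin 3) (Fin 2) ℝ → ℝ≥0∞) (ξ : Matrix (Fin 3) (Fin 2) ℝ) : ℝ≥0∞ :=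
  ⨅ (φ : EuclideanSpace ℝ (Fin 2) → EuclideanSpace ℝ (Fin 3))
    (_ : (∃ K, LipschitzWith K φ) ∧
      ∀ x ∉ Metric.ball (0 : EuclideanSpace ℝ (Fin 2)) 1, φ x = 0),
    (∫⁻ x in Metric.ball (0 : EuclideanSpace ℝ (Fin 2)) 1, f (ξ + gradM φ x)) /
      volume (Metric.ball (0 : EuclideanSpace ℝ (Fin 2)) 1)



section Helpers

open Matrix

local notation "M32" => Matrix (Fin 3) (Fin 2) ℝ

lemma frob_eq_norm (F : M32) :
    frob F = ‖(WithLp.equiv 2 (Fin 3 × Fin 2 → ℝ)).symm (fun q => F q.1 q.2)‖ := by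
  rw [EuclideanSpace.norm_eq]
  simp [frob, Real.norm_eq_abs, sq_abs, Fintype.sum_prod_type]

lemma enorm3_eq_norm (w : Fin 3 → ℝ) :
    enorm3 w = ‖(WithLp.equiv 2 (Fin 3 → ℝ)).symm w‖ := by
  rw [EuclideanSpace.norm_eq]
  simp [enorm3, Real.norm_eq_abs, sq_abs]

lemma frob_nonneg (F : M32) : 0 ≤ frob F := Real.sqrt_nonneg _

lemma enorm3_nonneg (w : Fin 3 → ℝ) : 0 ≤ enorm3 w := Real.sqrt_nonneg _

lemma frob_add_le (A B : M32) : frob (A + B) ≤ frob A + frob B := by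
  rw [frob_eq_norm, frob_eq_norm, frob_eq_norm]
  rw [show (WithLp.equiv 2 (Fin 3 × Fin 2 → ℝ)).symm (fun q => (A + B) q.1 q.2)
    = (WithLp.equiv 2 (Fin 3 × Fin 2 → ℝ)).symm (fun q => A q.1 q.2)
      + (WithLp.equiv 2 (Fin 3 × Fin 2 → ℝ)).symm (fun q => B q.1 q.2) from rfl]
  exact norm_add_le _ _

lemma frob_smul (c : ℝ) (A : M32) : frob (c • A) = |c| * frob A := by
  rw [frob_eq_norm, frob_eq_norm]
  rw [show (WithLp.equiv 2 (Fin 3 × Fin 2 → ℝ)).symm (fun q => (c • A) q.1 q.2)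
    = c • (WithLp.equiv 2 (Fin 3 × Fin 2 → ℝ)).symm (fun q => A q.1 q.2) from rfl]
  rw [norm_smul, Real.norm_eq_abs]

lemma enorm3_smul (c : ℝ) (w : Fin 3 → ℝ) : enorm3 (c • w) = |c| * enorm3 w := by
  rw [enorm3_eq_norm, enorm3_eq_norm]
  rw [show (WithLp.equiv 2 (Fin 3 → ℝ)).symm (c • w)
    = c • (WithLp.equiv 2 (Fin 3 → ℝ)).symm w from rfl]
  rw [norm_smul, Real.norm_eq_abs]

lemma enorm3_sq (w : Fin 3 → ℝ) : enorm3 w ^ 2 = w ⬝ᵥ w := by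
  rw [enorm3, Real.sq_sqrt (by positivity)]
  simp [dotProduct, sq]

lemma enorm3_pos {v : Fin 3 → ℝ} (hv : v ≠ 0) : 0 < enorm3 v := by
  rw [enorm3, Real.sqrt_pos]
  obtain ⟨i, hi⟩ := Function.ne_iff.mp hv
  exact Finset.sum_pos' (fun j _ => sq_nonneg _) ⟨i, Finset.mem_univ i, by exact lt_of_le_of_ne (sq_nonneg _) (Ne.symm (pow_ne_zero 2 hi))⟩

lemma enorm3_zero_of (w : Fin 3 → ℝ) (h : w = 0) : enorm3 w = 0 := by
  simp [h, enorm3]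

lemma one_le_enorm3 {w : Fin 3 → ℝ} (h : 1 ≤ w ⬝ᵥ w) : 1 ≤ enorm3 w := by
  have h2 : (1:ℝ) ≤ enorm3 w ^ 2 := by rw [enorm3_sq]; exact h
  nlinarith [enorm3_nonneg w]

/-- Matrix with column `j` equal to `n` and the other column zero. -/
def colMat (n : Fin 3 → ℝ) (j : Fin 2) : M32 := Matrix.of fun i k => if k = j then n i else 0

lemma colMat_mulVecLin (n : Fin 3 → ℝ) (j : Fin 2) (x : Fin 2 → ℝ) :
    (colMat n j).mulVecLin x = x j • n := by
  ext i
  simp [colMat, Matrix.mulVecLin_apply, Matrix.mulVec, dotProduct, ite_mul,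
    Finset.sum_ite_eq' (Finset.univ : Finset (Fin 2)) j, mul_comm]

lemma rank_colMat {n : Fin 3 → ℝ} (hn : n ≠ 0) (j : Fin 2) : (colMat n j).rank = 1 := by
  have hr : LinearMap.range (colMat n j).mulVecLin = Submodule.span ℝ {n} := by
    apply le_antisymm
    · rintro y ⟨x, rfl⟩
      rw [colMat_mulVecLin]
      exact Submodule.smul_mem _ _ (Submodule.mem_span_singleton_self n)
    · rw [Submodule.span_le, Set.singleton_subset_iff]
      exact ⟨Pi.single j 1, by rw [colMat_mulVecLin]; simp⟩
  rw [Matrix.rank, hr, finrank_span_singleton hn]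


/-- Matrix with given columns. -/
def mat2 (a b : Fin 3 → ℝ) : M32 := Matrix.of fun i j => if j = 0 then a i else b i

lemma mat2_cols (F : M32) : F = mat2 (fun i => F i 0) (fun i => F i 1) := by
  ext i j
  fin_cases j <;> simp [mat2]

lemma colCross_mat2 (a b : Fin 3 → ℝ) : colCross (mat2 a b) = a ⨯₃ b := by
  have h0 : (fun i => mat2 a b i 0) = a := by funext i; simp [mat2]
  have h1 : (fun i => mat2 a b i 1) = b := by funext i; simp [mat2]
  rw [colCross, h0, h1]

lemma frob_mat2_right (n : Fin 3 → ℝ) : frob (mat2 0 n) = enorm3 n := by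
  simp [frob, mat2, enorm3, Fin.sum_univ_two]

lemma frob_mat2_left (n : Fin 3 → ℝ) : frob (mat2 n 0) = enorm3 n := by
  simp [frob, mat2, enorm3, Fin.sum_univ_two]

lemma unit_perp (v : Fin 3 → ℝ) : ∃ m : Fin 3 → ℝ, enorm3 m = 1 ∧ m ⬝ᵥ v = 0 := by
  by_cases h01 : v 0 = 0 ∧ v 1 = 0
  · refine ⟨![1, 0, 0], ?_, ?_⟩
    · simp [enorm3, Fin.sum_univ_three]
    · simp [dotProduct, Fin.sum_univ_three, h01.1]
  · set w : Fin 3 → ℝ := ![v 1, -v 0, 0] with hw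
    have hwne : w ≠ 0 := by
      intro h
      apply h01
      constructor
      · have := congrFun h 1; simpa [hw] using this
      · have := congrFun h 0; simpa [hw] using this
    have hpos := enorm3_pos hwne
    refine ⟨(enorm3 w)⁻¹ • w, ?_, ?_⟩
    · rw [enorm3_smul, abs_inv, abs_of_pos hpos, inv_mul_cancel₀ hpos.ne']
    · rw [smul_dotProduct]
      have : w ⬝ᵥ v = 0 := by simp [hw, dotProduct, Fin.sum_univ_three]; ring
      rw [this, smul_zero]

lemma unit_perp_perp (v c : Fin 3 → ℝ) (hcv : c ⬝ᵥ v = 0) :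
    ∃ n : Fin 3 → ℝ, enorm3 n = 1 ∧ n ⬝ᵥ v = 0 ∧ c ⬝ᵥ (n ⨯₃ v) = 0 := by
  by_cases hc : c = 0
  · obtain ⟨m, hm1, hm2⟩ := unit_perp v
    exact ⟨m, hm1, hm2, by simp [hc]⟩
  · have hpos := enorm3_pos hc
    refine ⟨(enorm3 c)⁻¹ • c, ?_, ?_, ?_⟩
    · rw [enorm3_smul, abs_inv, abs_of_pos hpos, inv_mul_cancel₀ hpos.ne']
    · rw [smul_dotProduct, hcv, smul_zero]
    · have hlin : ((enorm3 c)⁻¹ • c) ⨯₃ v = (enorm3 c)⁻¹ • (c ⨯₃ v) := by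
        rw [_root_.map_smul]; rfl
      rw [hlin, dotProduct_smul, dot_self_cross, smul_zero]


lemma frob_convex_comb {l : ℝ} (hl0 : 0 ≤ l) (hl1 : l ≤ 1) (A B : M32) :
    frob (l • A + (1 - l) • B) ≤ l * frob A + (1 - l) * frob B := by
  calc frob (l • A + (1 - l) • B) ≤ frob (l • A) + frob ((1 - l) • B) := frob_add_le _ _
    _ = l * frob A + (1 - l) * frob B := by
        rw [frob_smul, frob_smul, abs_of_nonneg hl0, abs_of_nonneg (by linarith)]

lemma frob_rpow_comb {p : ℝ} (hp : 1 ≤ p) {l : ℝ} (hl0 : 0 ≤ l) (hl1 : l ≤ 1) (A B : M32) :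
    frob (l • A + (1 - l) • B) ^ p ≤ l * frob A ^ p + (1 - l) * frob B ^ p := by
  have h1 : frob (l • A + (1 - l) • B) ^ p ≤ (l * frob A + (1 - l) * frob B) ^ p :=
    Real.rpow_le_rpow (frob_nonneg _) (frob_convex_comb hl0 hl1 A B) (by linarith)
  have h2 := (convexOn_rpow hp).2 (Set.mem_Ici.mpr (frob_nonneg A))
    (Set.mem_Ici.mpr (frob_nonneg B)) hl0 (by linarith : (0:ℝ) ≤ 1 - l) (by ring)
  simp only [smul_eq_mul] at h2
  linarith

/-- The coercive minorant is rank-one convex. -/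
lemma roc_minorant {p : ℝ} (hp : 1 ≤ p) {C₁ : ℝ} (hC₁ : 0 < C₁) :
    RankOneConvex (fun F => ENNReal.ofReal (C₁ * frob F ^ p - C₁⁻¹)) := by
  intro l hl A B _
  have hl0 : 0 ≤ l := hl.1.le
  have hl1 : l ≤ 1 := hl.2.le
  have hreal : C₁ * frob (l • A + (1 - l) • B) ^ p - C₁⁻¹
      ≤ l * (C₁ * frob A ^ p - C₁⁻¹) + (1 - l) * (C₁ * frob B ^ p - C₁⁻¹) := by
    have := frob_rpow_comb hp hl0 hl1 A B
    nlinarith [hC₁.le]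
  calc ENNReal.ofReal (C₁ * frob (l • A + (1 - l) • B) ^ p - C₁⁻¹)
      ≤ ENNReal.ofReal (l * (C₁ * frob A ^ p - C₁⁻¹) + (1 - l) * (C₁ * frob B ^ p - C₁⁻¹)) :=
        ENNReal.ofReal_le_ofReal hreal
    _ ≤ ENNReal.ofReal (l * (C₁ * frob A ^ p - C₁⁻¹))
        + ENNReal.ofReal ((1 - l) * (C₁ * frob B ^ p - C₁⁻¹)) := ENNReal.ofReal_add_le
    _ ≤ ENNReal.ofReal l * ENNReal.ofReal (C₁ * frob A ^ p - C₁⁻¹)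
        + ENNReal.ofReal (1 - l) * ENNReal.ofReal (C₁ * frob B ^ p - C₁⁻¹) := by
        rw [ENNReal.ofReal_mul hl0, ENNReal.ofReal_mul (by linarith)]

lemma le_rcEnv {f g : M32 → ℝ≥0∞} (hg : RankOneConvex g ∧ ∀ G, g G ≤ f G) (F : M32) :
    g F ≤ rcEnv f F :=
  le_iSup_of_le g (le_iSup_of_le hg le_rfl)

lemma rcEnv_le {f : M32 → ℝ≥0∞} {F : M32} {K : ℝ≥0∞}
    (h : ∀ g, RankOneConvex g → (∀ G, g G ≤ f G) → g F ≤ K) : rcEnv f F ≤ K :=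
  iSup_le fun g => iSup_le fun hg => h g hg.1 hg.2

lemma roc_rcEnv (f : M32 → ℝ≥0∞) : RankOneConvex (rcEnv f) := by
  intro l hl A B hr
  apply rcEnv_le
  intro g hg1 hg2
  exact (hg1 l hl A B hr).trans (add_le_add
    (mul_le_mul_right (le_rcEnv ⟨hg1, hg2⟩ A) _)
    (mul_le_mul_right (le_rcEnv ⟨hg1, hg2⟩ B) _))


lemma enorm3_unit_ne_zero {m : Fin 3 → ℝ} (hm : enorm3 m = 1) : m ≠ 0 := by
  intro h; rw [h] at hm; simp [enorm3] at hm

lemma dot_self_eq_one {m : Fin 3 → ℝ} (hm : enorm3 m = 1) : m ⬝ᵥ m = 1 := by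
  rw [← enorm3_sq, hm]; norm_num

lemma dot_self_nonneg' (w : Fin 3 → ℝ) : 0 ≤ w ⬝ᵥ w := by
  rw [← enorm3_sq]; positivity

lemma half_comb {g : M32 → ℝ≥0∞} (hg : RankOneConvex g) {X Y Z : M32} {K : ℝ≥0∞}
    (hr : (X - Y).rank = 1) (hz : Z = (1/2 : ℝ) • X + (1 - (1/2 : ℝ)) • Y)
    (hX : g X ≤ K) (hY : g Y ≤ K) : g Z ≤ K := by
  have h := hg (1/2) (by constructor <;> norm_num) X Y hr
  rw [← hz] at h
  refine h.trans ?_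
  have h12 : (1 : ℝ) - 1/2 = 1/2 := by norm_num
  rw [h12]
  calc ENNReal.ofReal (1/2) * g X + ENNReal.ofReal (1/2) * g Y
      ≤ ENNReal.ofReal (1/2) * K + ENNReal.ofReal (1/2) * K :=
        add_le_add (mul_le_mul_right hX _) (mul_le_mul_right hY _)
    _ = (ENNReal.ofReal (1/2) + ENNReal.ofReal (1/2)) * K := (add_mul _ _ _).symm
    _ = K := by rw [← ENNReal.ofReal_add (by norm_num) (by norm_num)]; norm_num

lemma mat2_mid (a b m : Fin 3 → ℝ) :
    mat2 a b = (1/2 : ℝ) • mat2 a (b + m) + (1 - (1/2 : ℝ)) • mat2 a (b - m) := by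
  ext i k
  fin_cases k <;> simp [mat2] <;> ring

lemma mat2_mid' (a v n : Fin 3 → ℝ) :
    mat2 a v = (1/2 : ℝ) • mat2 (a + n) v + (1 - (1/2 : ℝ)) • mat2 (a - n) v := by
  ext i k
  fin_cases k <;> simp [mat2] <;> ring

lemma mat2_sub_right (a b m : Fin 3 → ℝ) :
    mat2 a (b + m) - mat2 a (b - m) = colMat ((2:ℝ) • m) 1 := by
  ext i k
  fin_cases k <;> simp [mat2, colMat] <;> ring

lemma mat2_sub_left (a v n : Fin 3 → ℝ) :
    mat2 (a + n) v - mat2 (a - n) v = colMat ((2:ℝ) • n) 0 := by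
  ext i k
  fin_cases k <;> simp [mat2, colMat] <;> ring

lemma mat2_split_right (a b m : Fin 3 → ℝ) : mat2 a (b + m) = mat2 a b + mat2 0 m := by
  ext i k; fin_cases k <;> simp [mat2]

lemma mat2_split_left (a v n : Fin 3 → ℝ) : mat2 (a + n) v = mat2 a v + mat2 n 0 := by
  ext i k; fin_cases k <;> simp [mat2]

lemma frob_mat2_right_le (a b m : Fin 3 → ℝ) :
    frob (mat2 a (b + m)) ≤ frob (mat2 a b) + enorm3 m := by
  rw [mat2_split_right]
  exact (frob_add_le _ _).trans (by rw [frob_mat2_right])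

lemma frob_mat2_left_le (a v n : Fin 3 → ℝ) :
    frob (mat2 (a + n) v) ≤ frob (mat2 a v) + enorm3 n := by
  rw [mat2_split_left]
  exact (frob_add_le _ _).trans (by rw [frob_mat2_left])

lemma cross_arm_ge (a v n : Fin 3 → ℝ) (hn1 : enorm3 n = 1) (hnv : n ⬝ᵥ v = 0)
    (hperp : (a ⨯₃ v) ⬝ᵥ (n ⨯₃ v) = 0) (hv : 1 ≤ v ⬝ᵥ v) (s : ℝ) (hs : s = 1 ∨ s = -1) :
    1 ≤ enorm3 (colCross (mat2 (a + s • n) v)) := by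
  apply one_le_enorm3
  have hcross : (a + s • n) ⨯₃ v = a ⨯₃ v + s • (n ⨯₃ v) := by
    rw [_root_.map_add, _root_.map_smul]; rfl
  rw [colCross_mat2, hcross]
  have hnn : n ⬝ᵥ n = 1 := dot_self_eq_one hn1
  have hBC : (n ⨯₃ v) ⬝ᵥ (n ⨯₃ v) = (n ⬝ᵥ n) * (v ⬝ᵥ v) - (n ⬝ᵥ v) * (v ⬝ᵥ n) :=
    cross_dot_cross n v n v
  have hvn : v ⬝ᵥ n = 0 := by rw [dotProduct_comm]; exact hnv
  rw [hnv, hvn, hnn, one_mul, mul_zero, sub_zero] at hBC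
  have hexp : (a ⨯₃ v + s • (n ⨯₃ v)) ⬝ᵥ (a ⨯₃ v + s • (n ⨯₃ v))
      = (a ⨯₃ v) ⬝ᵥ (a ⨯₃ v) + s * ((a ⨯₃ v) ⬝ᵥ (n ⨯₃ v)) + s * ((n ⨯₃ v) ⬝ᵥ (a ⨯₃ v))
        + s * s * ((n ⨯₃ v) ⬝ᵥ (n ⨯₃ v)) := by
    rw [add_dotProduct, dotProduct_add, dotProduct_add,
      smul_dotProduct, smul_dotProduct, dotProduct_smul,
      dotProduct_smul]
    simp only [smul_eq_mul]
    ring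
  have hsym : (n ⨯₃ v) ⬝ᵥ (a ⨯₃ v) = 0 := by rw [dotProduct_comm]; exact hperp
  rw [hexp, hperp, hsym, hBC]
  have hs2 : s * s = 1 := by rcases hs with h | h <;> rw [h] <;> norm_num
  have := dot_self_nonneg' (a ⨯₃ v)
  rw [hs2]
  linarith

lemma step2 {p : ℝ} (hp : 1 ≤ p) {c1 : ℝ} (hc1 : 0 < c1) {W₀ : M32 → ℝ≥0∞}
    (hgrow1 : ∀ F, 1 ≤ enorm3 (colCross F) → W₀ F ≤ ENNReal.ofReal (c1 * (1 + frob F ^ p)))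
    {g : M32 → ℝ≥0∞} (hg1 : RankOneConvex g) (hg2 : ∀ G, g G ≤ W₀ G)
    (a v : Fin 3 → ℝ) (hv : 1 ≤ v ⬝ᵥ v) :
    g (mat2 a v) ≤ ENNReal.ofReal (c1 * (1 + (frob (mat2 a v) + 1) ^ p)) := by
  have hcv : (a ⨯₃ v) ⬝ᵥ v = 0 := by
    rw [dotProduct_comm]; exact dot_cross_self a v
  obtain ⟨n, hn1, hnv, hperp⟩ := unit_perp_perp v (a ⨯₃ v) hcv
  set K := ENNReal.ofReal (c1 * (1 + (frob (mat2 a v) + 1) ^ p)) with hK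
  have harm : ∀ s : ℝ, s = 1 ∨ s = -1 → g (mat2 (a + s • n) v) ≤ K := by
    intro s hs
    have hcr := cross_arm_ge a v n hn1 hnv hperp hv s hs
    refine (hg2 _).trans ((hgrow1 _ hcr).trans (ENNReal.ofReal_le_ofReal ?_))
    have hfr : frob (mat2 (a + s • n) v) ≤ frob (mat2 a v) + 1 := by
      have := frob_mat2_left_le a v (s • n)
      have hsn : enorm3 (s • n) = 1 := by
        have : enorm3 (s • n) = |s| * enorm3 n := by
          rw [show s • n = s • n from rfl]
          exact enorm3_smul s n
        rw [this, hn1, mul_one]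
        rcases hs with h | h <;> rw [h] <;> norm_num
      linarith [frob_mat2_left_le a v (s • n)]
    have hrp : frob (mat2 (a + s • n) v) ^ p ≤ (frob (mat2 a v) + 1) ^ p :=
      Real.rpow_le_rpow (frob_nonneg _) hfr (by linarith)
    nlinarith
  have hmid := mat2_mid' a v n
  have hsub : (mat2 (a + n) v - mat2 (a - n) v).rank = 1 := by
    rw [mat2_sub_left]
    exact rank_colMat (smul_ne_zero two_ne_zero (enorm3_unit_ne_zero hn1)) 0
  have h1 := harm 1 (Or.inl rfl)
  have h2 := harm (-1) (Or.inr rfl)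
  rw [one_smul] at h1
  have h2' : g (mat2 (a - n) v) ≤ K := by
    rw [show a - n = a + (-1 : ℝ) • n by simp [sub_eq_add_neg]]
    exact h2
  exact half_comb hg1 hsub hmid h1 h2'

lemma growth_const {p : ℝ} (hp : 1 ≤ p) {c1 : ℝ} (hc1 : 0 < c1) {t : ℝ} (ht : 0 ≤ t) :
    c1 * (1 + (t + 2) ^ p) ≤ (c1 * (1 + 2 ^ p + 4 ^ p)) * (1 + t ^ p) := by
  have h2p : (0:ℝ) < 2 ^ p := Real.rpow_pos_of_pos (by norm_num) p
  have h4p : (0:ℝ) < 4 ^ p := Real.rpow_pos_of_pos (by norm_num) p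
  have htp : (0:ℝ) ≤ t ^ p := Real.rpow_nonneg ht p
  rcases le_total t 2 with h | h
  · have : (t + 2) ^ p ≤ 4 ^ p :=
      Real.rpow_le_rpow (by linarith) (by linarith) (by linarith)
    nlinarith [mul_nonneg hc1.le htp, mul_nonneg hc1.le h2p.le, mul_nonneg hc1.le h4p.le,
      mul_nonneg (mul_nonneg hc1.le h2p.le) htp, mul_nonneg (mul_nonneg hc1.le h4p.le) htp,
      mul_le_mul_of_nonneg_left this hc1.le]
  · have h1 : (t + 2) ^ p ≤ (2 * t) ^ p :=
      Real.rpow_le_rpow (by linarith) (by linarith) (by linarith)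
    have h2 : ((2:ℝ) * t) ^ p = 2 ^ p * t ^ p := Real.mul_rpow (by norm_num) ht
    nlinarith [mul_nonneg hc1.le htp, mul_nonneg hc1.le h2p.le, mul_nonneg hc1.le h4p.le,
      mul_nonneg (mul_nonneg hc1.le h2p.le) htp, mul_nonneg (mul_nonneg hc1.le h4p.le) htp,
      mul_le_mul_of_nonneg_left (h1.trans_eq h2) hc1.le]

lemma upper_key {p : ℝ} (hp : 1 ≤ p) {c1 : ℝ} (hc1 : 0 < c1) {W₀ : M32 → ℝ≥0∞}
    (hgrow1 : ∀ F, 1 ≤ enorm3 (colCross F) → W₀ F ≤ ENNReal.ofReal (c1 * (1 + frob F ^ p)))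
    {g : M32 → ℝ≥0∞} (hg1 : RankOneConvex g) (hg2 : ∀ G, g G ≤ W₀ G) (F : M32) :
    g F ≤ ENNReal.ofReal ((c1 * (1 + 2 ^ p + 4 ^ p)) * (1 + frob F ^ p)) := by
  set a : Fin 3 → ℝ := fun i => F i 0
  set b : Fin 3 → ℝ := fun i => F i 1
  have hF : F = mat2 a b := mat2_cols F
  obtain ⟨m, hm1, hmb⟩ := unit_perp b
  -- arms of the first lamination
  have hvdot : ∀ s : ℝ, s = 1 ∨ s = -1 → 1 ≤ (b + s • m) ⬝ᵥ (b + s • m) := by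
    intro s hs
    have hmm : m ⬝ᵥ m = 1 := dot_self_eq_one hm1
    have hbm : b ⬝ᵥ m = 0 := by rw [dotProduct_comm]; exact hmb
    have hexp : (b + s • m) ⬝ᵥ (b + s • m)
        = b ⬝ᵥ b + s * (b ⬝ᵥ m) + s * (m ⬝ᵥ b) + s * s * (m ⬝ᵥ m) := by
      rw [add_dotProduct, dotProduct_add, dotProduct_add,
        smul_dotProduct, smul_dotProduct, dotProduct_smul,
        dotProduct_smul]
      simp only [smul_eq_mul]; ring
    have hs2 : s * s = 1 := by rcases hs with h | h <;> rw [h] <;> norm_num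
    have := dot_self_nonneg' b
    rw [hexp, hbm, hmb, hs2, hmm]
    linarith
  set K := ENNReal.ofReal ((c1 * (1 + 2 ^ p + 4 ^ p)) * (1 + frob F ^ p)) with hKdef
  have harm : ∀ s : ℝ, s = 1 ∨ s = -1 → g (mat2 a (b + s • m)) ≤ K := by
    intro s hs
    refine (step2 hp hc1 hgrow1 hg1 hg2 a (b + s • m) (hvdot s hs)).trans
      (ENNReal.ofReal_le_ofReal ?_)
    have hsm : enorm3 (s • m) = 1 := by
      rw [enorm3_smul, hm1, mul_one]
      rcases hs with h | h <;> rw [h] <;> norm_num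
    have hfr : frob (mat2 a (b + s • m)) ≤ frob F + 1 := by
      have := frob_mat2_right_le a b (s • m)
      rw [hsm] at this
      rw [hF]; linarith
    have hrp : (frob (mat2 a (b + s • m)) + 1) ^ p ≤ (frob F + 2) ^ p :=
      Real.rpow_le_rpow (by linarith [frob_nonneg (mat2 a (b + s • m))]) (by linarith)
        (by linarith)
    have := growth_const hp hc1 (frob_nonneg F)
    nlinarith
  have hmid : F = (1/2 : ℝ) • mat2 a (b + m) + (1 - (1/2:ℝ)) • mat2 a (b - m) := by
    rw [hF]; exact mat2_mid a b m
  have hsub : (mat2 a (b + m) - mat2 a (b - m)).rank = 1 := by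
    rw [mat2_sub_right]
    exact rank_colMat (smul_ne_zero two_ne_zero (enorm3_unit_ne_zero hm1)) 1
  have h1 := harm 1 (Or.inl rfl)
  have h2 := harm (-1) (Or.inr rfl)
  rw [one_smul] at h1
  have h2' : g (mat2 a (b - m)) ≤ K := by
    rw [show b - m = b + (-1 : ℝ) • m by simp [sub_eq_add_neg]]
    exact h2
  exact half_comb hg1 hsub hmid h1 h2'


lemma oneDim {v : ℝ → ℝ} (hv : ConvexOn ℝ Set.univ v) (h0 : ∀ x, 0 ≤ v x)
    {a b M : ℝ} (hab : a ≤ b) (hM : ∀ x, a - 1 ≤ x → x ≤ b + 1 → v x ≤ M)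
    {s t : ℝ} (hs : s ∈ Set.Icc a b) (ht : t ∈ Set.Icc a b) :
    |v s - v t| ≤ M * |s - t| := by
  have hM0 : 0 ≤ M := (h0 a).trans (hM a (by linarith) (by linarith))
  -- wlog s ≤ t
  have key : ∀ s t : ℝ, s ∈ Set.Icc a b → t ∈ Set.Icc a b → s < t →
      |v s - v t| ≤ M * (t - s) := by
    intro s t hs ht hst
    have hub : v t - v s ≤ M * (t - s) := by
      have hslope := hv.slope_mono_adjacent (Set.mem_univ s) (Set.mem_univ (b + 1))
        hst (by linarith [ht.2] : t < b + 1)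
      have h1 : (v (b+1) - v t) / (b + 1 - t) ≤ M := by
        rw [div_le_iff₀ (by linarith [ht.2])]
        have hvb := hM (b+1) (by linarith) (le_refl _)
        have := h0 t
        nlinarith [ht.2]
      have h2 : (v t - v s) / (t - s) ≤ M := le_trans hslope h1
      rw [div_le_iff₀ (by linarith)] at h2
      linarith
    have hlb : v s - v t ≤ M * (t - s) := by
      have hslope := hv.slope_mono_adjacent (Set.mem_univ (a - 1)) (Set.mem_univ t)
        (by linarith [hs.1] : a - 1 < s) hst
      have h1 : -M ≤ (v s - v (a-1)) / (s - (a - 1)) := by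
        rw [le_div_iff₀ (by linarith [hs.1])]
        have hva := hM (a-1) (le_refl _) (by linarith)
        have := h0 s
        nlinarith [hs.1]
      have h2 : -M ≤ (v t - v s) / (t - s) := le_trans h1 hslope
      rw [le_div_iff₀ (by linarith)] at h2
      linarith
    rw [abs_sub_le_iff]
    constructor <;> linarith
  rcases lt_trichotomy s t with h | h | h
  · rw [abs_of_nonpos (by linarith : s - t ≤ 0)]
    have := key s t hs ht h
    linarith [this]
  · simp [h]
  · rw [abs_of_nonneg (by linarith : 0 ≤ s - t)]
    have := key t s ht hs h
    rw [abs_sub_comm] at this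
    linarith


lemma smul_colMat (c : ℝ) (n : Fin 3 → ℝ) (j : Fin 2) :
    c • colMat n j = colMat (c • n) j := by
  ext i k
  simp [colMat, mul_ite]

/-- Convexity of the envelope along lines in a rank-one direction. -/
lemma cvx1d {W : M32 → ℝ≥0∞} (hroc : RankOneConvex W) (hfin : ∀ F, W F ≠ ⊤)
    (A : M32) {n : Fin 3 → ℝ} (hn : n ≠ 0) (j : Fin 2) :
    ConvexOn ℝ (Set.univ : Set ℝ) (fun t => (W (A + t • colMat n j)).toReal) := by
  constructor
  · exact convex_univ
  · intro x _ y _ la lb hla hlb hab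
    rcases eq_or_lt_of_le hla with h0 | hla'
    · have : lb = 1 := by linarith
      simp [← h0, this]
    rcases eq_or_lt_of_le hlb with h0 | hlb'
    · have : la = 1 := by linarith
      simp [← h0, this]
    by_cases hxy : x = y
    · subst hxy
      have h1 : la • x + lb • x = x := by rw [← add_smul, hab, one_smul]
      rw [h1]
      simp only [smul_eq_mul]
      rw [← add_mul, hab, one_mul]
    · have hlb1 : lb = 1 - la := by linarith
      have hrank : ((A + x • colMat n j) - (A + y • colMat n j)).rank = 1 := by
        have : (A + x • colMat n j) - (A + y • colMat n j) = colMat ((x - y) • n) j := by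
          rw [← smul_colMat]
          ext i k
          simp [Matrix.add_apply, Matrix.sub_apply, Matrix.smul_apply]
          ring
        rw [this]
        exact rank_colMat (smul_ne_zero (sub_ne_zero.mpr hxy) hn) j
      have h := hroc la ⟨hla', by linarith⟩ (A + x • colMat n j) (A + y • colMat n j) hrank
      have hmid : la • (A + x • colMat n j) + (1 - la) • (A + y • colMat n j)
          = A + (la • x + lb • y) • colMat n j := by
        rw [hlb1]
        ext i k
        simp [Matrix.add_apply, Matrix.smul_apply]
        ring
      rw [hmid] at h
      have hne : ENNReal.ofReal la * W (A + x • colMat n j)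
          + ENNReal.ofReal (1 - la) * W (A + y • colMat n j) ≠ ⊤ :=
        ENNReal.add_ne_top.mpr ⟨ENNReal.mul_ne_top ENNReal.ofReal_ne_top (hfin _),
          ENNReal.mul_ne_top ENNReal.ofReal_ne_top (hfin _)⟩
      have h2 := ENNReal.toReal_mono hne h
      rw [ENNReal.toReal_add (ENNReal.mul_ne_top ENNReal.ofReal_ne_top (hfin _))
        (ENNReal.mul_ne_top ENNReal.ofReal_ne_top (hfin _)),
        ENNReal.toReal_mul, ENNReal.toReal_mul,
        ENNReal.toReal_ofReal hla, ENNReal.toReal_ofReal (by linarith : (0:ℝ) ≤ 1 - la)]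
        at h2
      rw [← hlb1] at h2
      exact h2

/-- Update one entry of a matrix. -/
def updM (Z : M32) (i : Fin 3) (j : Fin 2) (τ : ℝ) : M32 :=
  Matrix.of fun i' j' => if i' = i ∧ j' = j then τ else Z i' j'

lemma updM_eq_line (Z : M32) (i : Fin 3) (j : Fin 2) (τ : ℝ) :
    updM Z i j τ = (Z - Z i j • colMat (Pi.single i 1) j) + τ • colMat (Pi.single i 1) j := by
  ext i' j'
  by_cases h : i' = i ∧ j' = j
  · obtain ⟨rfl, rfl⟩ := h
    simp [updM, colMat, Matrix.add_apply, Matrix.sub_apply, Matrix.smul_apply]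
  · simp only [updM, Matrix.of_apply, if_neg h, Matrix.add_apply, Matrix.sub_apply,
      Matrix.smul_apply, colMat]
    rcases Decidable.not_and_iff_or_not.mp h with h1 | h1
    · by_cases h2 : j' = j
      · simp [h2, Pi.single_apply, h1]
      · simp [h2]
    · simp [h1]

lemma updM_self (Z : M32) (i : Fin 3) (j : Fin 2) : updM Z i j (Z i j) = Z := by
  ext i' j'
  simp only [updM, Matrix.of_apply]
  split_ifs with h
  · obtain ⟨rfl, rfl⟩ := h; rfl
  · rfl

lemma updM_apply (Z : M32) (i : Fin 3) (j : Fin 2) (τ : ℝ) (i' : Fin 3) (j' : Fin 2) :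
    updM Z i j τ i' j' = if i' = i ∧ j' = j then τ else Z i' j' := rfl

section Key
variable {W : M32 → ℝ≥0∞} (hroc : RankOneConvex W) (hfin : ∀ F, W F ≠ ⊤)
  {F₀ : M32} {M0 : ℝ}
  (hub : ∀ X : M32, (∀ i' j', |X i' j' - F₀ i' j'| ≤ 2) → (W X).toReal ≤ M0)

include hroc hfin hub in
lemma key1 (i : Fin 3) (j : Fin 2) (Z : M32)
    (hZ : ∀ i' j', |Z i' j' - F₀ i' j'| ≤ 1) (s t : ℝ)
    (hs : |s - F₀ i j| ≤ 1) (ht : |t - F₀ i j| ≤ 1) :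
    |(W (updM Z i j s)).toReal - (W (updM Z i j t)).toReal| ≤ M0 * |s - t| := by
  have hn : (Pi.single i 1 : Fin 3 → ℝ) ≠ 0 := by
    intro h
    have := congrFun h i
    simp at this
  have hconv : ConvexOn ℝ (Set.univ : Set ℝ)
      (fun τ => (W (updM Z i j τ)).toReal) := by
    have := cvx1d hroc hfin (Z - Z i j • colMat (Pi.single i 1) j) hn j
    convert this using 2 with τ
    rw [updM_eq_line]
  have hM : ∀ x, (F₀ i j - 1) - 1 ≤ x → x ≤ (F₀ i j + 1) + 1 →
      (W (updM Z i j x)).toReal ≤ M0 := by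
    intro x hx1 hx2
    apply hub
    intro i' j'
    rw [updM_apply]
    split_ifs with h
    · obtain ⟨rfl, rfl⟩ := h
      rw [abs_le]; constructor <;> linarith
    · linarith [hZ i' j', abs_nonneg (Z i' j' - F₀ i' j')]
  have := oneDim hconv (fun x => ENNReal.toReal_nonneg) (by linarith : F₀ i j - 1 ≤ F₀ i j + 1)
    hM (s := s) (t := t) (abs_le.mp hs |> fun h => ⟨by linarith [h.1], by linarith [h.2]⟩)
    (abs_le.mp ht |> fun h => ⟨by linarith [h.1], by linarith [h.2]⟩)
  exact this

/-- Blend two matrices along a set of entries. -/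
def blendM (S : Finset (Fin 3 × Fin 2)) (X Y : M32) : M32 :=
  Matrix.of fun i j => if (i, j) ∈ S then X i j else Y i j

lemma blendM_empty (X Y : M32) : blendM ∅ X Y = Y := by
  ext i j; simp [blendM]

lemma blendM_univ (X Y : M32) : blendM Finset.univ X Y = X := by
  ext i j; simp [blendM]

lemma blendM_insert (a : Fin 3 × Fin 2) (S : Finset (Fin 3 × Fin 2)) (ha : a ∉ S)
    (X Y : M32) :
    blendM (insert a S) X Y = updM (blendM S X Y) a.1 a.2 (X a.1 a.2) := by
  ext i j
  rw [updM_apply]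
  by_cases h : i = a.1 ∧ j = a.2
  · obtain ⟨rfl, rfl⟩ := h
    simp [blendM]
  · have h' : (i, j) ≠ a := by
      intro he
      exact h ⟨congrArg Prod.fst he, congrArg Prod.snd he⟩
    simp only [blendM, Matrix.of_apply, Finset.mem_insert, if_neg h]
    rw [if_congr (iff_of_eq (congrArg _ rfl)) rfl rfl]
    congr 1
    simp [h']

lemma blendM_notmem_apply (S : Finset (Fin 3 × Fin 2)) (a : Fin 3 × Fin 2) (ha : a ∉ S)
    (X Y : M32) : blendM S X Y a.1 a.2 = Y a.1 a.2 := by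
  simp [blendM, ha]

include hroc hfin hub in
lemma telescope (X Y : M32) (hX : ∀ i' j', |X i' j' - F₀ i' j'| ≤ 1)
    (hY : ∀ i' j', |Y i' j' - F₀ i' j'| ≤ 1) (S : Finset (Fin 3 × Fin 2)) :
    |(W (blendM S X Y)).toReal - (W Y).toReal|
      ≤ M0 * ∑ q ∈ S, |X q.1 q.2 - Y q.1 q.2| := by
  induction S using Finset.induction_on with
  | empty => simp [blendM_empty]
  | insert a S ha ih =>
    have hblend : ∀ i' j', |blendM S X Y i' j' - F₀ i' j'| ≤ 1 := by
      intro i' j'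
      simp only [blendM, Matrix.of_apply]
      split_ifs
      · exact hX i' j'
      · exact hY i' j'
    have hstep : |(W (blendM (insert a S) X Y)).toReal - (W (blendM S X Y)).toReal|
        ≤ M0 * |X a.1 a.2 - Y a.1 a.2| := by
      rw [blendM_insert a S ha]
      have h2 : blendM S X Y = updM (blendM S X Y) a.1 a.2 (Y a.1 a.2) := by
        conv_lhs => rw [← updM_self (blendM S X Y) a.1 a.2]
        rw [blendM_notmem_apply S a ha]
      rw [show (W (blendM S X Y)).toReal
          = (W (updM (blendM S X Y) a.1 a.2 (Y a.1 a.2))).toReal by rw [← h2]]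
      exact key1 hroc hfin hub a.1 a.2 (blendM S X Y) hblend _ _ (hX a.1 a.2) (hY a.1 a.2)
    calc |(W (blendM (insert a S) X Y)).toReal - (W Y).toReal|
        ≤ |(W (blendM (insert a S) X Y)).toReal - (W (blendM S X Y)).toReal|
          + |(W (blendM S X Y)).toReal - (W Y).toReal| := abs_sub_le _ _ _
      _ ≤ M0 * |X a.1 a.2 - Y a.1 a.2| + M0 * ∑ q ∈ S, |X q.1 q.2 - Y q.1 q.2| :=
          add_le_add hstep ih
      _ = M0 * ∑ q ∈ insert a S, |X q.1 q.2 - Y q.1 q.2| := by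
          rw [Finset.sum_insert ha]; ring

end Key

lemma continuous_of_roc {W : M32 → ℝ≥0∞} (hroc : RankOneConvex W) {p Cu : ℝ}
    (hp : 1 ≤ p) (hCu : 0 < Cu)
    (hub : ∀ F, W F ≤ ENNReal.ofReal (Cu * (1 + frob F ^ p))) : Continuous W := by
  have hfin : ∀ F, W F ≠ ⊤ := fun F =>
    ne_top_of_le_ne_top ENNReal.ofReal_ne_top (hub F)
  have hu_ub : ∀ F, (W F).toReal ≤ Cu * (1 + frob F ^ p) := by
    intro F
    refine ENNReal.toReal_le_of_le_ofReal ?_ (hub F)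
    have : (0:ℝ) ≤ frob F ^ p := Real.rpow_nonneg (frob_nonneg F) p
    nlinarith
  have hu : Continuous fun F => (W F).toReal := by
    rw [continuous_iff_continuousAt]
    intro F₀
    set M0 : ℝ := Cu * (1 + (frob F₀ + 5) ^ p) with hM0
    have hub2 : ∀ X : M32, (∀ i' j', |X i' j' - F₀ i' j'| ≤ 2) → (W X).toReal ≤ M0 := by
      intro X hX
      have h1 : ∀ i j, (X i j - F₀ i j) ^ 2 ≤ 4 := by
        intro i j
        have := abs_le.mp (hX i j)
        nlinarith
      have hsum : ∑ i, ∑ j, ((X - F₀) i j) ^ 2 ≤ 25 := by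
        have hinner : ∀ i : Fin 3, ∑ j, ((X - F₀) i j) ^ 2 ≤ 8 := by
          intro i
          have : ∑ j, ((X - F₀) i j) ^ 2 ≤ ∑ _j : Fin 2, (4:ℝ) :=
            Finset.sum_le_sum fun j _ => by
              rw [Matrix.sub_apply]; exact h1 i j
          simpa using this.trans_eq (by norm_num)
        have : ∑ i, ∑ j, ((X - F₀) i j) ^ 2 ≤ ∑ _i : Fin 3, (8:ℝ) :=
          Finset.sum_le_sum fun i _ => hinner i
        simpa using this.trans (by norm_num)
      have hfr5 : frob (X - F₀) ≤ 5 := by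
        rw [frob]
        calc Real.sqrt (∑ i, ∑ j, ((X - F₀) i j) ^ 2) ≤ Real.sqrt 25 :=
              Real.sqrt_le_sqrt hsum
          _ = 5 := by
              rw [show (25:ℝ) = 5 ^ 2 by norm_num, Real.sqrt_sq (by norm_num)]
      have hfr : frob X ≤ frob F₀ + 5 := by
        have := frob_add_le F₀ (X - F₀)
        rw [add_sub_cancel] at this
        linarith
      have hrp : frob X ^ p ≤ (frob F₀ + 5) ^ p :=
        Real.rpow_le_rpow (frob_nonneg X) hfr (by linarith)
      calc (W X).toReal ≤ Cu * (1 + frob X ^ p) := hu_ub X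
        _ ≤ M0 := by rw [hM0]; nlinarith
    have hev : ∀ᶠ X in nhds F₀, ∀ i' j', |X i' j' - F₀ i' j'| ≤ 1 := by
      rw [Filter.eventually_all]
      intro i
      rw [Filter.eventually_all]
      intro j
      have hc : Filter.Tendsto (fun X : M32 => X i j) (nhds F₀) (nhds (F₀ i j)) :=
        (((continuous_apply j).comp (continuous_apply i)).tendsto F₀ :)
      have hball : ∀ᶠ r in nhds (F₀ i j), |r - F₀ i j| ≤ 1 := by
        filter_upwards [Metric.ball_mem_nhds (F₀ i j) one_pos] with r hr
        have := Metric.mem_ball.mp hr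
        rw [Real.dist_eq] at this
        linarith
      exact hc.eventually hball
    have hscont : Continuous fun X : M32 => ∑ q : Fin 3 × Fin 2, |X q.1 q.2 - F₀ q.1 q.2| :=
      continuous_finset_sum _ fun q _ =>
        ((((continuous_apply q.2).comp (continuous_apply q.1) :
          Continuous fun X : M32 => X q.1 q.2)).sub continuous_const).abs
    have hs0 : Filter.Tendsto (fun X : M32 => M0 * ∑ q : Fin 3 × Fin 2, |X q.1 q.2 - F₀ q.1 q.2|)
        (nhds F₀) (nhds 0) := by
      have := (hscont.tendsto F₀).const_mul M0
      simpa using this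
    rw [ContinuousAt, tendsto_iff_dist_tendsto_zero]
    apply squeeze_zero' (Filter.Eventually.of_forall fun X => dist_nonneg) _ hs0
    filter_upwards [hev] with X hX
    rw [Real.dist_eq]
    have hY : ∀ i' j', |F₀ i' j' - F₀ i' j'| ≤ 1 := by
      intro i' j'; simp
    have := telescope hroc hfin hub2 X F₀ hX hY Finset.univ
    rw [blendM_univ] at this
    exact this
  have hW : W = fun F => ENNReal.ofReal ((W F).toReal) :=
    funext fun F => (ENNReal.ofReal_toReal (hfin F)).symm
  rw [hW]
  exact ENNReal.continuous_ofReal.comp hu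

end Helpers

/-- the rank-one convex envelope of `W₀` is finite-valued, continuous,
`p`-coercive with the same constant `C₁`, and has `p`-growth from above. -/
theorem stmt3 (p : ℝ) (hp : 1 < p) (W₀ : Matrix (Fin 3) (Fin 2) ℝ → ℝ≥0∞)
    (C₁ : ℝ) (hC₁ : 0 < C₁)
    (hcont : Continuous W₀)
    (hcoer : ∀ F, ENNReal.ofReal (C₁ * frob F ^ p - C₁⁻¹) ≤ W₀ F)
    (htop : ∀ F, W₀ F = ⊤ ↔ colCross F = 0)
    (hgrowth : ∀ δ : ℝ, 0 < δ → ∃ c : ℝ, 0 < c ∧ ∀ F,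
      δ ≤ enorm3 (colCross F) → W₀ F ≤ ENNReal.ofReal (c * (1 + frob F ^ p))) :
    (∀ F, rcEnv W₀ F ≠ ⊤) ∧
    Continuous (rcEnv W₀) ∧
    (∀ F, ENNReal.ofReal (C₁ * frob F ^ p - C₁⁻¹) ≤ rcEnv W₀ F) ∧
    (∃ C : ℝ, 0 < C ∧ ∀ F, rcEnv W₀ F ≤ ENNReal.ofReal (C * (1 + frob F ^ p))) := by
  obtain ⟨c1, hc1, hgrow1⟩ := hgrowth 1 one_pos
  have h2p : (0:ℝ) < 2 ^ p := Real.rpow_pos_of_pos (by norm_num) p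
  have h4p : (0:ℝ) < 4 ^ p := Real.rpow_pos_of_pos (by norm_num) p
  set Cu : ℝ := c1 * (1 + 2 ^ p + 4 ^ p) with hCudef
  have hCu : 0 < Cu := by rw [hCudef]; nlinarith
  have hub : ∀ F, rcEnv W₀ F ≤ ENNReal.ofReal (Cu * (1 + frob F ^ p)) := fun F =>
    rcEnv_le fun g h1 h2 => upper_key hp.le hc1 hgrow1 h1 h2 F
  have hfin : ∀ F, rcEnv W₀ F ≠ ⊤ := fun F =>
    ne_top_of_le_ne_top ENNReal.ofReal_ne_top (hub F)
  have hroc := roc_rcEnv W₀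
  refine ⟨hfin, continuous_of_roc hroc hp.le hCu hub, ?_, Cu, hCu, hub⟩
  intro F
  exact le_rcEnv ⟨roc_minorant hp.le hC₁, fun G => hcoer G⟩ F
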